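/- Let S be a nonempty set, H a real Hilbert space, and Φ_re, Φ_im : S → H. Define the evaluation map ev : H → (S → ℂ) by ev f s := ⟪f, Φ_re s⟫_H + i·⟪f, Φ_im s⟫_H, the complex kernel k(s,s₀) := ev (Φ_re s₀) s − i·ev (Φ_im s₀) s, and the pseudo-kernel c(s,s₀) := ev (Φ_re s₀) s + i·ev (Φ_im s₀) s. Let n ≥ 1, s₁,…,sₙ ∈ S, y ∈ ℂⁿ, and let K, C be the n×n matrices K_{ij} = k(sᵢ,sⱼ), C_{ij} = c(sᵢ,sⱼ). Then there exists g ∈ H with ev g sᵢ = yᵢ for all i if and only if there exists γ ∈ ℂⁿ with K·γ + C·conj(γ) = y. Moreover, for any such γ, the element g₀ := Σⱼ (2·Re(γⱼ)·Φ_re sⱼ + 2·Im(γⱼ)·Φ_im sⱼ) — whose ev-image is the function Σⱼ γⱼ·k(·,sⱼ) + conj(γⱼ)·c(·,sⱼ) — satisfies ev g₀ sᵢ = yᵢ for all i, and for every h ∈ H with ev h sᵢ = yᵢ for all i one has ‖g₀‖ ≤ ‖h‖, with equality only if h = g₀. -/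

import Mathlib

open Matrix ComplexConjugate
open scoped BigOperators

/-- **Minimum-norm interpolation in a complex/real RKHS.**  `H` is a real Hilbert space
of ℂ-valued functions on `S` via `ev f s = ⟪f, Φre s⟫ + i ⟪f, Φim s⟫`; the complex
kernel is `k(s,s₀) = ev (Φre s₀) s − i · ev (Φim s₀) s` and the pseudo-kernel is
`c(s,s₀) = ev (Φre s₀) s + i · ev (Φim s₀) s`.  Interpolation data `(s i, y i)` can be
matched by some `g ∈ H` iff the system `K γ + C (conj γ) = y` is solvable; for any
solution `γ`, `g₀ = ∑ j (2 Re γⱼ) Φre sⱼ + (2 Im γⱼ) Φim sⱼ` — whose `ev`-image is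
`∑ⱼ γⱼ k(·,sⱼ) + conj γⱼ c(·,sⱼ)` — is the unique minimum-norm interpolant. -/
theorem stmt11 {S : Type*} [Nonempty S] {H : Type*} [NormedAddCommGroup H]
    [InnerProductSpace ℝ H] [CompleteSpace H] (Φre Φim : S → H)
    (ev : H → S → ℂ)
    (hev : ∀ f s, ev f s =
      ((inner ℝ f (Φre s) : ℝ) : ℂ) + ((inner ℝ f (Φim s) : ℝ) : ℂ) * Complex.I)
    (k c : S → S → ℂ)
    (hk : ∀ s s₀, k s s₀ = ev (Φre s₀) s - Complex.I * ev (Φim s₀) s)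
    (hc : ∀ s s₀, c s s₀ = ev (Φre s₀) s + Complex.I * ev (Φim s₀) s)
    (n : ℕ) (hn : 1 ≤ n) (s : Fin n → S) (y : Fin n → ℂ)
    (K C : Matrix (Fin n) (Fin n) ℂ)
    (hK : ∀ i j, K i j = k (s i) (s j)) (hC : ∀ i j, C i j = c (s i) (s j)) :
    ((∃ g : H, ∀ i, ev g (s i) = y i) ↔
      ∃ γ : Fin n → ℂ, K.mulVec γ + C.mulVec (fun j => conj (γ j)) = y) ∧
    ∀ γ : Fin n → ℂ, K.mulVec γ + C.mulVec (fun j => conj (γ j)) = y →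
      ∀ g₀ : H,
        g₀ = ∑ j, ((2 * (γ j).re) • Φre (s j) + (2 * (γ j).im) • Φim (s j)) →
        (∀ t, ev g₀ t = ∑ j, (γ j * k t (s j) + conj (γ j) * c t (s j))) ∧
        (∀ i, ev g₀ (s i) = y i) ∧
        ∀ h : H, (∀ i, ev h (s i) = y i) →
          ‖g₀‖ ≤ ‖h‖ ∧ (‖g₀‖ = ‖h‖ → h = g₀) := by
  -- linearity of `ev` in its first argument
  have evlin : ∀ t : S, IsLinearMap ℝ (fun f : H => ev f t) := by
    intro t
    refine ⟨fun f g => ?_, fun r f => ?_⟩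
    · rw [hev, hev, hev, inner_add_left, inner_add_left]; push_cast; ring
    · rw [hev, hev, real_inner_smul_left, real_inner_smul_left, Complex.real_smul]
      push_cast; ring
  let E : S → H →ₗ[ℝ] ℂ := fun t => IsLinearMap.mk' _ (evlin t)
  have ev_sum : ∀ (f : Fin n → H) (t : S), ev (∑ j, f j) t = ∑ j, ev (f j) t :=
    fun f t => map_sum (E t) f Finset.univ
  have ev_sub : ∀ (f g : H) (t : S), ev (f - g) t = ev f t - ev g t :=
    fun f g t => map_sub (E t) f g
  have ev_smul : ∀ (r : ℝ) (f : H) (t : S), ev (r • f) t = (r : ℂ) * ev f t := by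
    intro r f t
    rw [hev, hev, real_inner_smul_left, real_inner_smul_left]; push_cast; ring
  have ev_add : ∀ (f g : H) (t : S), ev (f + g) t = ev f t + ev g t :=
    fun f g t => map_add (E t) f g
  -- complex algebra identity
  have alg : ∀ (γ u v : ℂ), γ * (u - Complex.I * v) + conj γ * (u + Complex.I * v)
      = ((2 * γ.re : ℝ) : ℂ) * u + ((2 * γ.im : ℝ) : ℂ) * v := by
    intro γ u v
    rw [Complex.ext_iff]
    constructor <;>
      · simp only [Complex.add_re, Complex.add_im, Complex.mul_re, Complex.mul_im,
          Complex.sub_re, Complex.sub_im, Complex.I_re, Complex.I_im, Complex.conj_re,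
          Complex.conj_im, Complex.ofReal_re, Complex.ofReal_im]
        try ring
  -- `ev` of the canonical combination
  have key : ∀ (γ : Fin n → ℂ) (t : S),
      ev (∑ j, ((2 * (γ j).re) • Φre (s j) + (2 * (γ j).im) • Φim (s j))) t
        = ∑ j, (γ j * k t (s j) + conj (γ j) * c t (s j)) := by
    intro γ t
    rw [ev_sum]
    refine Finset.sum_congr rfl fun j _ => ?_
    rw [ev_add, ev_smul, ev_smul, hk, hc, alg]
  -- matrix system componentwise
  have mat : ∀ (γ : Fin n → ℂ) (i : Fin n),
      (K.mulVec γ + C.mulVec (fun j => conj (γ j))) i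
        = ∑ j, (γ j * k (s i) (s j) + conj (γ j) * c (s i) (s j)) := by
    intro γ i
    simp only [Pi.add_apply, Matrix.mulVec, dotProduct, hK, hC]
    rw [← Finset.sum_add_distrib]
    exact Finset.sum_congr rfl fun j _ => by ring
  -- vanishing ev gives vanishing inner products
  have inner_zero : ∀ (f : H) (t : S), ev f t = 0 →
      inner ℝ f (Φre t) = (0 : ℝ) ∧ inner ℝ f (Φim t) = (0 : ℝ) := by
    intro f t h0
    rw [hev] at h0
    constructor
    · have := congrArg Complex.re h0; simpa using this
    · have := congrArg Complex.im h0; simpa using this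
  -- the second (main) part
  have part2 : ∀ γ : Fin n → ℂ, K.mulVec γ + C.mulVec (fun j => conj (γ j)) = y →
      ∀ g₀ : H,
        g₀ = ∑ j, ((2 * (γ j).re) • Φre (s j) + (2 * (γ j).im) • Φim (s j)) →
        (∀ t, ev g₀ t = ∑ j, (γ j * k t (s j) + conj (γ j) * c t (s j))) ∧
        (∀ i, ev g₀ (s i) = y i) ∧
        ∀ h : H, (∀ i, ev h (s i) = y i) →
          ‖g₀‖ ≤ ‖h‖ ∧ (‖g₀‖ = ‖h‖ → h = g₀) := by
    intro γ hγ g₀ hg₀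
    have h1 : ∀ t, ev g₀ t = ∑ j, (γ j * k t (s j) + conj (γ j) * c t (s j)) := by
      intro t; rw [hg₀]; exact key γ t
    have h2 : ∀ i, ev g₀ (s i) = y i := by
      intro i; rw [h1, ← mat γ i, hγ]
    refine ⟨h1, h2, ?_⟩
    intro h hinterp
    have hz : ∀ i, ev (h - g₀) (s i) = 0 := by
      intro i; rw [ev_sub, hinterp i, h2 i, sub_self]
    have horth : inner ℝ (h - g₀) g₀ = (0 : ℝ) := by
      nth_rewrite 2 [hg₀]
      rw [inner_sum]
      refine Finset.sum_eq_zero fun j _ => ?_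
      have hz' := inner_zero _ _ (hz j)
      rw [inner_add_right, real_inner_smul_right, real_inner_smul_right, hz'.1, hz'.2]
      ring
    have hdecomp : ‖h‖ ^ 2 = ‖g₀‖ ^ 2 + ‖h - g₀‖ ^ 2 := by
      have e : ‖g₀ + (h - g₀)‖ ^ 2
          = ‖g₀‖ ^ 2 + 2 * inner ℝ g₀ (h - g₀) + ‖h - g₀‖ ^ 2 := norm_add_sq_real _ _
      have e2 : g₀ + (h - g₀) = h := by abel
      rw [e2, real_inner_comm, horth] at e
      linarith
    constructor
    · nlinarith [norm_nonneg h, norm_nonneg g₀, sq_nonneg ‖h - g₀‖]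
    · intro heq
      have hsq : ‖h - g₀‖ ^ 2 = 0 := by rw [heq] at hdecomp; linarith
      have hnz : ‖h - g₀‖ = 0 := by
        have h0 : ‖h - g₀‖ * ‖h - g₀‖ = 0 := by rw [← sq]; exact hsq
        rcases mul_eq_zero.mp h0 with h' | h' <;> exact h'
      have : h - g₀ = 0 := norm_eq_zero.mp hnz
      exact sub_eq_zero.mp this
  refine ⟨⟨?_, ?_⟩, part2⟩
  · rintro ⟨g, hg⟩
    set v : Fin n ⊕ Fin n → H := Sum.elim (fun i => Φre (s i)) (fun i => Φim (s i)) with hv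
    set V := Submodule.span ℝ (Set.range v) with hV
    haveI : FiniteDimensional ℝ V := FiniteDimensional.span_of_finite ℝ (Set.finite_range v)
    set p : H := (V.orthogonalProjectionOnto g : H) with hp
    have hporth : g - p ∈ Vᗮ := Submodule.sub_starProjection_mem_orthogonal (K := V) g
    have hmem : ∀ u ∈ V, inner ℝ (g - p) u = (0 : ℝ) :=
      fun u hu => (Submodule.mem_orthogonal' V (g - p)).mp hporth u hu
    have hevp : ∀ i, ev p (s i) = y i := by
      intro i
      have hre : inner ℝ (g - p) (Φre (s i)) = (0 : ℝ) :=
        hmem _ (Submodule.subset_span ⟨Sum.inl i, rfl⟩)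
      have him : inner ℝ (g - p) (Φim (s i)) = (0 : ℝ) :=
        hmem _ (Submodule.subset_span ⟨Sum.inr i, rfl⟩)
      have h0 : ev (g - p) (s i) = 0 := by rw [hev, hre, him]; simp
      rw [ev_sub] at h0
      have := sub_eq_zero.mp h0
      exact this.symm.trans (hg i)
    have hpV : p ∈ V := (V.orthogonalProjectionOnto g).2
    obtain ⟨cf, hcf⟩ := (Submodule.mem_span_range_iff_exists_fun ℝ).mp hpV
    set γ : Fin n → ℂ := fun j => ⟨cf (Sum.inl j) / 2, cf (Sum.inr j) / 2⟩ with hγdef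
    have hgform : ∑ j, ((2 * (γ j).re) • Φre (s j) + (2 * (γ j).im) • Φim (s j)) = p := by
      rw [← hcf, Fintype.sum_sum_type, Finset.sum_add_distrib]
      congr 1
      · refine Finset.sum_congr rfl fun j _ => ?_
        have : 2 * (γ j).re = cf (Sum.inl j) := by simp [hγdef]; ring
        rw [this]; simp [hv]
      · refine Finset.sum_congr rfl fun j _ => ?_
        have : 2 * (γ j).im = cf (Sum.inr j) := by simp [hγdef]; ring
        rw [this]; simp [hv]
    refine ⟨γ, ?_⟩
    funext i
    rw [mat γ i, ← key γ (s i), hgform]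
    exact hevp i
  · rintro ⟨γ, hγ⟩
    exact ⟨_, (part2 γ hγ _ rfl).2.1⟩
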